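/- The only positive integer solutions (k, n) of the equation F_1 + 2F_2 + 3F_3 + ... + kF_k = F_n are (1,1), (1,2), (2,4), and (4,8). -/

import Mathlib

open Nat

lemma key_identity (k : ℕ) :
    (∑ j ∈ Finset.Icc 1 k, j * Nat.fib j) + Nat.fib (k+3) = k * Nat.fib (k+2) + 2 := by
  induction k with
  | zero => decide
  | succ k ih =>
    rw [Finset.sum_Icc_succ_top (by omega)]
    have h1 : Nat.fib (k+1+3) = Nat.fib (k+2) + Nat.fib (k+3) := Nat.fib_add_two
    have h2 : Nat.fib (k+3) = Nat.fib (k+1) + Nat.fib (k+2) := Nat.fib_add_two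
    have h3 : Nat.fib (k+1+2) = Nat.fib (k+3) := rfl
    rw [h3, h1]
    nlinarith [ih]

lemma two_mul_le_fib : ∀ m, 8 ≤ m → 2*m ≤ Nat.fib m := by
  intro m hm
  induction m, hm using Nat.le_induction with
  | base => decide
  | succ m hm ih =>
    have h : Nat.fib (m+1) = Nat.fib (m-1) + Nat.fib m := by
      rw [show m+1 = (m-1)+2 by omega, Nat.fib_add_two]
      congr 2
      omega
    have h2 : 2 ≤ Nat.fib (m-1) :=
      le_trans (by decide : 2 ≤ Nat.fib 3) (Nat.fib_mono (by omega))
    omega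

lemma cassini (k : ℕ) : (Nat.fib k : ℤ) * Nat.fib (k+2) = (Nat.fib (k+1))^2 + (-1)^(k+1) := by
  induction k with
  | zero => decide
  | succ k ih =>
    have h1 : (Nat.fib (k+3) : ℤ) = Nat.fib (k+1) + Nat.fib (k+2) := by
      rw [show k+3 = (k+1)+2 by ring, Nat.fib_add_two]; push_cast; ring
    have h2 : (Nat.fib (k+2) : ℤ) = Nat.fib k + Nat.fib (k+1) := by
      rw [Nat.fib_add_two]; push_cast; ring
    rw [show k+1+2 = k+3 by ring, h1, show k+1+1 = k+2 by ring]
    rw [show (-1:ℤ)^(k+1+1) = (-1)^(k+1) * (-1) by ring]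
    nlinarith [ih, h2]

lemma fib_lb {c a n : ℕ} (h : Nat.fib n = c) (hc : Nat.fib a < c) : a < n := by
  by_contra h'
  push_neg at h'
  have := Nat.fib_mono h'
  omega

lemma fib_ub {c a n : ℕ} (h : Nat.fib n = c) (hc : c < Nat.fib a) : n < a := by
  by_contra h'
  push_neg at h'
  have := Nat.fib_mono h'
  omega

lemma big_case (k n : ℕ) (hk : 9 ≤ k)
    (hid : Nat.fib n + Nat.fib (k+3) = k * Nat.fib (k+2) + 2) : False := by
  have hf32 : Nat.fib (k+3) = Nat.fib (k+1) + Nat.fib (k+2) := Nat.fib_add_two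
  have hf21 : Nat.fib (k+2) = Nat.fib k + Nat.fib (k+1) := Nat.fib_add_two
  have hf10 : Nat.fib (k+1) = Nat.fib (k-1) + Nat.fib k := by
    rw [show k+1 = (k-1)+2 by omega, Nat.fib_add_two]; congr 2; omega
  have hfkpos : 2 ≤ Nat.fib k := le_trans (by decide : 2 ≤ Nat.fib 3) (Nat.fib_mono (by omega))
  have hfk1pos : 0 < Nat.fib (k-1) := Nat.fib_pos.mpr (by omega)
  -- step A : n ≥ k + 4
  have hA : k + 3 < n := by
    have : Nat.fib (k+3) < Nat.fib n := by nlinarith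
    exact fib_lb rfl this
  obtain ⟨t, rfl⟩ : ∃ t, n = t + (k+1) + 1 := ⟨n - k - 2, by omega⟩
  have ht : 2 ≤ t := by omega
  have hfib : Nat.fib (t + (k+1) + 1)
      = Nat.fib t * Nat.fib (k+1) + Nat.fib (t+1) * Nat.fib (k+2) := Nat.fib_add t (k+1)
  rw [hfib] at hid
  have hft1 : 2 ≤ Nat.fib (t+1) :=
    le_trans (by decide : 2 ≤ Nat.fib 3) (Nat.fib_mono (by omega))
  have hftpos : 0 < Nat.fib t := Nat.fib_pos.mpr (by omega)
  -- step B : fib (t+1) + 1 ≤ k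
  have hB : Nat.fib (t+1) + 1 ≤ k := by
    by_contra h'
    push_neg at h'
    have h'' : k ≤ Nat.fib (t+1) := by omega
    have : k * Nat.fib (k+2) ≤ Nat.fib (t+1) * Nat.fib (k+2) :=
      Nat.mul_le_mul_right _ h''
    nlinarith
  obtain ⟨a, ha⟩ : ∃ a, k = a + Nat.fib (t+1) + 1 := ⟨k - Nat.fib (t+1) - 1, by omega⟩
  -- step C
  have hSS : (Nat.fib t + 1) * Nat.fib (k+1) = a * Nat.fib (k+2) + 2 := by
    have hk' : k * Nat.fib (k+2)
        = a * Nat.fib (k+2) + Nat.fib (t+1) * Nat.fib (k+2) + Nat.fib (k+2) := by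
      rw [ha]; ring
    have hexp : (Nat.fib t + 1) * Nat.fib (k+1)
        = Nat.fib t * Nat.fib (k+1) + Nat.fib (k+1) := by ring
    omega
  -- step D : fib t + 1 ≤ 2k - 5
  have ha3 : a + 3 ≤ k := by omega
  have hD : Nat.fib t + 1 ≤ 2*k - 5 := by
    have h2 : a * Nat.fib (k+2) + 2 ≤ (2*k - 5) * Nat.fib (k+1) := by
      have hm : a * Nat.fib (k+2) ≤ (k-3) * (2 * Nat.fib (k+1)) :=
        Nat.mul_le_mul (by omega) (by omega)
      have h3 : (k-3) * (2 * Nat.fib (k+1)) + Nat.fib (k+1) = (2*k-5) * Nat.fib (k+1) := by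
        rw [show 2*k-5 = 2*(k-3)+1 by omega]; ring
      omega
    exact Nat.le_of_mul_le_mul_right (hSS ▸ h2) (by omega : 0 < Nat.fib (k+1))
  -- move to ℤ
  have hcas := cassini k
  have h1Z : ((Nat.fib t : ℤ) + 1) * Nat.fib (k+1) = a * Nat.fib (k+2) + 2 := by
    exact_mod_cast hSS
  have hZ : (Nat.fib (k+2) : ℤ) ∣ (((Nat.fib t : ℤ) + 1) * (-1)^k - 2 * Nat.fib (k+1)) := by
    refine ⟨a * Nat.fib (k+1) - ((Nat.fib t : ℤ) + 1) * Nat.fib k, ?_⟩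
    linear_combination (Nat.fib (k+1) : ℤ) * h1Z + ((Nat.fib t : ℤ) + 1) * hcas
  have hbig : 2*(k+2) ≤ Nat.fib (k+2) := two_mul_le_fib (k+2) (by omega)
  have hbig1 : 2*(k-1) ≤ Nat.fib (k-1) := two_mul_le_fib (k-1) (by omega)
  have hbigk : 2*k ≤ Nat.fib k := two_mul_le_fib k (by omega)
  rcases Nat.even_or_odd k with he | ho
  · -- even case
    have hsgn : ((-1:ℤ))^k = 1 := Even.neg_one_pow he
    rw [hsgn] at hZ
    have hZ2 : (Nat.fib (k+2) : ℤ) ∣ (((Nat.fib t : ℤ) + 1) - Nat.fib (k-1)) := by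
      have heq : ((Nat.fib t : ℤ) + 1) - Nat.fib (k-1)
          = (((Nat.fib t : ℤ) + 1) * 1 - 2 * Nat.fib (k+1)) + Nat.fib (k+2) := by
        have c1 : (Nat.fib (k+2) : ℤ) = Nat.fib k + Nat.fib (k+1) := by exact_mod_cast hf21
        have c2 : (Nat.fib (k+1) : ℤ) = Nat.fib (k-1) + Nat.fib k := by exact_mod_cast hf10
        rw [c1, c2]; ring
      rw [heq]
      exact dvd_add hZ (dvd_refl _)
    have habs : |((Nat.fib t : ℤ) + 1) - Nat.fib (k-1)| < (Nat.fib (k+2) : ℤ) := by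
      rw [abs_sub_lt_iff]
      constructor <;> omega
    have h0 := Int.eq_zero_of_abs_lt_dvd hZ2 habs
    omega
  · -- odd case
    have hsgn : ((-1:ℤ))^k = -1 := Odd.neg_one_pow ho
    rw [hsgn] at hZ
    have hZ2 : (Nat.fib (k+2) : ℤ) ∣ (((Nat.fib t : ℤ) + 1) - 2 * Nat.fib k) := by
      have hd1 : (Nat.fib (k+2) : ℤ) ∣ (((Nat.fib t : ℤ) + 1) + 2 * Nat.fib (k+1)) := by
        have h := (dvd_neg.mpr hZ : (Nat.fib (k+2) : ℤ) ∣ _)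
        rw [show -((((Nat.fib t : ℤ) + 1)) * (-1) - 2 * Nat.fib (k+1))
            = ((Nat.fib t : ℤ) + 1) + 2 * Nat.fib (k+1) by ring] at h
        exact h
      have h := dvd_sub hd1 (Dvd.dvd.mul_left (dvd_refl ((Nat.fib (k+2) : ℤ))) 2)
      have c1 : (Nat.fib (k+2) : ℤ) = Nat.fib k + Nat.fib (k+1) := by exact_mod_cast hf21
      have e : (((Nat.fib t : ℤ) + 1) + 2 * Nat.fib (k+1)) - 2 * Nat.fib (k+2)
          = ((Nat.fib t : ℤ) + 1) - 2 * Nat.fib k := by rw [c1]; ring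
      rwa [e] at h
    have habs : |((Nat.fib t : ℤ) + 1) - 2 * Nat.fib k| < (Nat.fib (k+2) : ℤ) := by
      rw [abs_sub_lt_iff]
      constructor <;> omega
    have h0 := Int.eq_zero_of_abs_lt_dvd hZ2 habs
    omega

theorem sum_j_fib_eq_fib (k n : ℕ) (hk : 0 < k) (hn : 0 < n) :
    (∑ j ∈ Finset.Icc 1 k, j * Nat.fib j) = Nat.fib n ↔
      (k, n) = (1, 1) ∨ (k, n) = (1, 2) ∨ (k, n) = (2, 4) ∨ (k, n) = (4, 8) := by
  constructor
  · intro h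
    have hid := key_identity k
    rw [h] at hid
    rcases Nat.lt_or_ge k 9 with hk9 | hk9
    · interval_cases k
      · -- k = 1 : fib n = 1
        have h1 : Nat.fib n = 1 := by norm_num [show Nat.fib 4 = 3 from rfl, show Nat.fib 3 = 2 from rfl] at hid; omega
        have := fib_ub h1 (show (1:ℕ) < Nat.fib 3 by decide)
        interval_cases n <;> simp
      · -- k = 2 : fib n = 3
        have h1 : Nat.fib n = 3 := by norm_num [show Nat.fib 5 = 5 from rfl, show Nat.fib 4 = 3 from rfl] at hid; omega
        have hu := fib_ub h1 (show (3:ℕ) < Nat.fib 5 by decide)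
        have hl := fib_lb h1 (show Nat.fib 3 < 3 by decide)
        interval_cases n <;> simp
      · -- k = 3 : fib n = 9
        have h1 : Nat.fib n = 9 := by norm_num [show Nat.fib 6 = 8 from rfl, show Nat.fib 5 = 5 from rfl] at hid; omega
        have hu := fib_ub h1 (show (9:ℕ) < Nat.fib 7 by decide)
        have hl := fib_lb h1 (show Nat.fib 6 < 9 by decide)
        omega
      · -- k = 4 : fib n = 21
        have h1 : Nat.fib n = 21 := by norm_num [show Nat.fib 7 = 13 from rfl, show Nat.fib 6 = 8 from rfl] at hid; omega
        have hu := fib_ub h1 (show (21:ℕ) < Nat.fib 9 by decide)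
        have hl := fib_lb h1 (show Nat.fib 7 < 21 by decide)
        interval_cases n <;> simp_all
      · -- k = 5 : fib n = 46
        have h1 : Nat.fib n = 46 := by norm_num [show Nat.fib 8 = 21 from rfl, show Nat.fib 7 = 13 from rfl] at hid; omega
        have hu := fib_ub h1 (show (46:ℕ) < Nat.fib 10 by decide)
        have hl := fib_lb h1 (show Nat.fib 9 < 46 by decide)
        omega
      · -- k = 6 : fib n = 94
        have h1 : Nat.fib n = 94 := by norm_num [show Nat.fib 9 = 34 from rfl, show Nat.fib 8 = 21 from rfl] at hid; omega
        have hu := fib_ub h1 (show (94:ℕ) < Nat.fib 12 by decide)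
        have hl := fib_lb h1 (show Nat.fib 11 < 94 by decide)
        omega
      · -- k = 7 : fib n = 185
        have h1 : Nat.fib n = 185 := by norm_num [show Nat.fib 10 = 55 from rfl, show Nat.fib 9 = 34 from rfl] at hid; omega
        have hu := fib_ub h1 (show (185:ℕ) < Nat.fib 13 by decide)
        have hl := fib_lb h1 (show Nat.fib 12 < 185 by decide)
        omega
      · -- k = 8 : fib n = 353
        have h1 : Nat.fib n = 353 := by norm_num [show Nat.fib 11 = 89 from rfl, show Nat.fib 10 = 55 from rfl] at hid; omega
        have hu := fib_ub h1 (show (353:ℕ) < Nat.fib 14 by decide)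
        have hl := fib_lb h1 (show Nat.fib 13 < 353 by decide)
        omega
    · exact absurd hid (by intro hid; exact big_case k n hk9 hid)
  · rintro (h|h|h|h) <;> injection h with h1 h2 <;> subst h1 <;> subst h2 <;> decide
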